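/- Let Q be a symmetric 3×3 real matrix and Q̄ := ½(tr(Q) I₃ − Q), with smallest and largest eigenvalues λ_min(Q̄) and λ_max(Q̄). Then for every rotation matrix R ∈ SO(3), ½ λ_min(Q̄) ‖I₃ − R‖_F² ≤ tr(Q (I₃ − R)) ≤ ½ λ_max(Q̄) ‖I₃ − R‖_F². -/

import Mathlib

open Matrix BigOperators

noncomputable section

abbrev V3 : Type := Fin 3 → ℝ
abbrev V4 : Type := (Fin 3 ⊕ Fin 1) → ℝ
abbrev V6 : Type := (Fin 3 → ℝ) × (Fin 3 → ℝ)
abbrev M3 : Type := Matrix (Fin 3) (Fin 3) ℝ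
abbrev M4 : Type := Matrix (Fin 3 ⊕ Fin 1) (Fin 3 ⊕ Fin 1) ℝ

/-- cross product on ℝ³ -/
def cross (x y : V3) : V3 := crossProduct x y

/-- skew-symmetric matrix `x^×` with `x^× y = x × y` -/
def skew (x : V3) : M3 := !![0, -x 2, x 1; x 2, 0, -x 0; -x 1, x 0, 0]

/-- rank-one matrix `x yᵀ` -/
def outer (x y : V3) : M3 := Matrix.vecMulVec x y

/-- `R` is a rotation matrix -/
def isRot (R : M3) : Prop := Rᵀ * R = 1 ∧ R.det = 1

def colV (p : V3) : Matrix (Fin 3) (Fin 1) ℝ := Matrix.of fun i _ => p i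
def rowV (p : V3) : Matrix (Fin 1) (Fin 3) ℝ := Matrix.of fun _ j => p j

/-- homogeneous matrix `[R, p; 0, 1]` -/
def SE3mat (R : M3) (p : V3) : M4 := Matrix.fromBlocks R (colV p) 0 1

/-- membership in SE(3) -/
def inSE3 (g : M4) : Prop := ∃ R p, isRot R ∧ g = SE3mat R p

/-- vector part of an element of ℝ⁴ -/
def vpart (r : V4) : V3 := fun i => r (Sum.inl i)
/-- scalar part of an element of ℝ⁴ -/
def spart (r : V4) : ℝ := r (Sum.inr 0)

/-- wedge product `b ∧ r := (b_v × r_v, b_s r_v − r_s b_v) ∈ ℝ⁶` -/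
def wedge (b r : V4) : V6 :=
  (cross (vpart b) (vpart r), spart b • vpart r - spart r • vpart b)

/-- `ψ_a(A) := ½(a₃₂ − a₂₃, a₁₃ − a₃₁, a₂₁ − a₁₂)` -/
def psia (A : M3) : V3 :=
  ![(A 2 1 - A 1 2) / 2, (A 0 2 - A 2 0) / 2, (A 1 0 - A 0 1) / 2]

/-- `ψ([A, b; c, d]) := (ψ_a(A), ½ b) ∈ ℝ⁶` -/
def psi (M : M4) : V6 :=
  (psia M.toBlocks₁₁, fun i => M (Sum.inl i) (Sum.inr 0) / 2)

/-- `ℙ([A, b; c, d]) := [(A − Aᵀ)/2, b; 0, 0]` -/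
def Pproj (M : M4) : M4 :=
  Matrix.fromBlocks ((1 / 2 : ℝ) • (M.toBlocks₁₁ - M.toBlocks₁₁ᵀ)) M.toBlocks₁₂ 0 0

/-- `Ad*_g = [Rᵀ, −Rᵀ p^×; 0, Rᵀ]` acting on ℝ⁶, for `g = [R, p; 0, 1]` -/
def AdStar (g : M4) (ξ : V6) : V6 :=
  ((g.toBlocks₁₁)ᵀ.mulVec (ξ.1 - cross (fun i => g (Sum.inl i) (Sum.inr 0)) ξ.2),
   (g.toBlocks₁₁)ᵀ.mulVec ξ.2)

/-- `(ω, v)^∧ := [ω^×, v; 0, 0]` -/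
def hat (ξ : V6) : M4 := Matrix.fromBlocks (skew ξ.1) (colV ξ.2) 0 0

/-- squared Euclidean norm on ℝ³ -/
def sq3 (x : V3) : ℝ := ∑ i, x i ^ 2
/-- squared Euclidean norm on ℝ⁴ -/
def sq4 (x : V4) : ℝ := ∑ i, x i ^ 2
/-- squared Euclidean norm on ℝ⁶ -/
def sq6 (ξ : V6) : ℝ := sq3 ξ.1 + sq3 ξ.2
/-- squared Frobenius norm of a 4×4 matrix -/
def frob4 (M : M4) : ℝ := ∑ i, ∑ j, M i j ^ 2
/-- squared Frobenius norm of a 3×3 matrix -/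
def frob3 (M : M3) : ℝ := ∑ i, ∑ j, M i j ^ 2

/-- membership in `𝓜₀` (last row zero, block form `[M₁, m₂; 0, 0]`) -/
def inM0 (M : M4) : Prop := ∃ (M₁ : M3) (m₂ : V3), M = Matrix.fromBlocks M₁ (colV m₂) 0 0

/-- `Δ_Q(u, v) := uᵀ((tr(Q) − 2 vᵀQv) I₃ − Q + 2 Q v vᵀ) u` -/
def DeltaQ (Q : M3) (u v : V3) : ℝ :=
  u ⬝ᵥ Matrix.mulVec
    ((Q.trace - 2 * (v ⬝ᵥ Q.mulVec v)) • (1 : M3) - Q + (2 : ℝ) • (Q * outer v v)) u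

/-- angle-axis rotation `R_a(θ, u) = I₃ + sin θ · u^× + (1 − cos θ)(u^×)²` -/
def Ra (θ : ℝ) (u : V3) : M3 :=
  1 + Real.sin θ • skew u + (1 - Real.cos θ) • (skew u * skew u)


section Stmt17Aux

lemma sum_smul_dot17 (c : Fin 3 → ℝ) (b : Fin 3 → V3) (v : V3) :
    (∑ j, c j • b j) ⬝ᵥ v = ∑ j, c j * (b j ⬝ᵥ v) := by
  simp [dotProduct, Finset.sum_apply, Finset.sum_mul, Finset.mul_sum]
  rw [Finset.sum_comm]
  simp [mul_assoc]

lemma quad_bound17 (Qbar : M3) (hsymb : Qbarᵀ = Qbar) (lmin lmax : ℝ)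
    (hmin : ∀ (μ : ℝ) (w : V3), w ≠ 0 → Qbar.mulVec w = μ • w → lmin ≤ μ)
    (hmax : ∀ (μ : ℝ) (w : V3), w ≠ 0 → Qbar.mulVec w = μ • w → μ ≤ lmax)
    (x : V3) :
    lmin * (x ⬝ᵥ x) ≤ x ⬝ᵥ Qbar.mulVec x ∧ x ⬝ᵥ Qbar.mulVec x ≤ lmax * (x ⬝ᵥ x) := by
  classical
  have hH : Qbar.IsHermitian := by
    rw [Matrix.IsHermitian, Matrix.conjTranspose_eq_transpose_of_trivial]; exact hsymb
  set b := hH.eigenvectorBasis with hb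
  set μ := hH.eigenvalues with hμ
  set e : Fin 3 → V3 := fun j i => b j i with he
  set c : Fin 3 → ℝ := fun j => inner ℝ (b j) (WithLp.toLp 2 x : EuclideanSpace ℝ (Fin 3)) with hc
  have hbe : ∀ j, Qbar.mulVec (e j) = μ j • e j := fun j => hH.mulVec_eigenvectorBasis j
  have hbne : ∀ j, e j ≠ 0 := by
    intro j hj
    have h1 : ‖b j‖ = 1 := b.orthonormal.1 j
    have : (b j : EuclideanSpace ℝ (Fin 3)) = 0 := by
      ext i; exact congrFun hj i
    rw [this] at h1; simp at h1
  have hlo : ∀ j, lmin ≤ μ j := fun j => hmin _ _ (hbne j) (hbe j)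
  have hhi : ∀ j, μ j ≤ lmax := fun j => hmax _ _ (hbne j) (hbe j)
  have hx' : (x : V3) = ∑ j, c j • e j := by
    have h := congrArg WithLp.ofLp (b.sum_repr' (WithLp.toLp 2 x : EuclideanSpace ℝ (Fin 3)))
    simp only [WithLp.ofLp_sum, WithLp.ofLp_smul, WithLp.ofLp_toLp] at h
    rw [← h]
  have hbx : ∀ j, e j ⬝ᵥ x = c j := by
    intro j
    simp [hc, PiLp.inner_apply, dotProduct, RCLike.inner_apply, he, mul_comm]
  have hxx : x ⬝ᵥ x = ∑ j, c j ^ 2 := by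
    calc x ⬝ᵥ x = (∑ j, c j • e j) ⬝ᵥ x := by rw [← hx']
    _ = ∑ j, c j * (e j ⬝ᵥ x) := sum_smul_dot17 _ _ _
    _ = ∑ j, c j ^ 2 := by
        refine Finset.sum_congr rfl fun j _ => ?_
        rw [hbx j]; ring
  have hedot : ∀ j, e j ⬝ᵥ Qbar.mulVec x = μ j * c j := by
    intro j
    have hv : e j ᵥ* Qbar = Qbar.mulVec (e j) := by
      nth_rewrite 1 [← hsymb]; rw [Matrix.vecMul_transpose]
    rw [Matrix.dotProduct_mulVec, hv, hbe j]
    simp [smul_dotProduct, hbx j]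
  have hxQx : x ⬝ᵥ Qbar.mulVec x = ∑ j, μ j * c j ^ 2 := by
    calc x ⬝ᵥ Qbar.mulVec x = (∑ j, c j • e j) ⬝ᵥ Qbar.mulVec x := by rw [← hx']
    _ = ∑ j, c j * (e j ⬝ᵥ Qbar.mulVec x) := sum_smul_dot17 _ _ _
    _ = ∑ j, μ j * c j ^ 2 := by
        refine Finset.sum_congr rfl fun j _ => ?_
        rw [hedot j]; ring
  constructor
  · rw [hxx, hxQx, Finset.mul_sum]
    refine Finset.sum_le_sum fun j _ => ?_
    nlinarith [sq_nonneg (c j), hlo j]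
  · rw [hxx, hxQx, Finset.mul_sum]
    refine Finset.sum_le_sum fun j _ => ?_
    nlinarith [sq_nonneg (c j), hhi j]

lemma rot_adj17 {R : M3} (hR : isRot R) : Rᵀ = adjugate R := by
  have h1 : R * Rᵀ = 1 := mul_eq_one_comm.mp hR.1
  calc Rᵀ = 1 * Rᵀ := (one_mul _).symm
  _ = (adjugate R * R) * Rᵀ := by rw [Matrix.adjugate_mul, hR.2, one_smul]
  _ = adjugate R * (R * Rᵀ) := by rw [Matrix.mul_assoc]
  _ = adjugate R := by rw [h1, Matrix.mul_one]

lemma rot_det017 {R : M3} (hR : isRot R) : (1 - R).det = 0 := by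
  have h1 : ((1:M3) - Rᵀ) = Rᵀ * (R - 1) := by rw [Matrix.mul_sub, hR.1, Matrix.mul_one]
  have e1 : ((1:M3) - R).det = ((1:M3) - Rᵀ).det := by
    rw [← Matrix.det_transpose (1 - R), Matrix.transpose_sub, Matrix.transpose_one]
  have e2 : ((1:M3) - Rᵀ).det = (R - 1).det := by
    rw [h1, Matrix.det_mul, Matrix.det_transpose, hR.2, one_mul]
  have e3 : ((R : M3) - 1).det = -((1:M3) - R).det := by
    rw [show (R - 1 : M3) = -(1 - R) from (neg_sub _ _).symm, Matrix.det_neg]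
    norm_num
  linarith

lemma rot_D_adj17 {R : M3} (hR : isRot R) :
    R + Rᵀ - (R.trace - 1) • (1:M3) = adjugate (1 - R) := by
  have hE : Rᵀ = !![R 1 1 * R 2 2 - R 1 2 * R 2 1,
      -(R 0 1 * R 2 2) + R 0 2 * R 2 1,
      R 0 1 * R 1 2 - R 0 2 * R 1 1;
      -(R 1 0 * R 2 2) + R 1 2 * R 2 0,
      R 0 0 * R 2 2 - R 0 2 * R 2 0,
      -(R 0 0 * R 1 2) + R 0 2 * R 1 0;
      R 1 0 * R 2 1 - R 1 1 * R 2 0,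
      -(R 0 0 * R 2 1) + R 0 1 * R 2 0,
      R 0 0 * R 1 1 - R 0 1 * R 1 0] := (rot_adj17 hR).trans (Matrix.adjugate_fin_three R)
  have e : ∀ i j, Rᵀ i j = (!![R 1 1 * R 2 2 - R 1 2 * R 2 1,
      -(R 0 1 * R 2 2) + R 0 2 * R 2 1,
      R 0 1 * R 1 2 - R 0 2 * R 1 1;
      -(R 1 0 * R 2 2) + R 1 2 * R 2 0,
      R 0 0 * R 2 2 - R 0 2 * R 2 0,
      -(R 0 0 * R 1 2) + R 0 2 * R 1 0;
      R 1 0 * R 2 1 - R 1 1 * R 2 0,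
      -(R 0 0 * R 2 1) + R 0 1 * R 2 0,
      R 0 0 * R 1 1 - R 0 1 * R 1 0] : M3) i j := fun i j => by rw [hE]
  have e00 := e 0 0; have e01 := e 0 1; have e02 := e 0 2
  have e10 := e 1 0; have e11 := e 1 1; have e12 := e 1 2
  have e20 := e 2 0; have e21 := e 2 1; have e22 := e 2 2
  simp [Matrix.transpose_apply] at e00 e01 e02 e10 e11 e12 e20 e21 e22
  rw [Matrix.adjugate_fin_three]
  ext i j
  fin_cases i <;> fin_cases j <;>
    simp [Matrix.trace, Matrix.diag, Fin.sum_univ_three, Matrix.one_apply] <;>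
    first
      | linear_combination e00 | linear_combination e01 | linear_combination e02
      | linear_combination e10 | linear_combination e11 | linear_combination e12
      | linear_combination e20 | linear_combination e21 | linear_combination e22

set_option maxHeartbeats 2000000 in
lemma adj_minor17 (B : M3) (hB : B.det = 0) (i j k l : Fin 3) :
    adjugate B i j * adjugate B k l = adjugate B i l * adjugate B k j := by
  have hd := hB
  rw [Matrix.det_fin_three] at hd
  rw [Matrix.adjugate_fin_three]
  fin_cases i <;> fin_cases j <;> fin_cases k <;> fin_cases l <;> simp <;>
    first
      | ring1
      | linear_combination (B 0 0) * hd | linear_combination (-(B 0 0)) * hd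
      | linear_combination (B 0 1) * hd | linear_combination (-(B 0 1)) * hd
      | linear_combination (B 0 2) * hd | linear_combination (-(B 0 2)) * hd
      | linear_combination (B 1 0) * hd | linear_combination (-(B 1 0)) * hd
      | linear_combination (B 1 1) * hd | linear_combination (-(B 1 1)) * hd
      | linear_combination (B 1 2) * hd | linear_combination (-(B 1 2)) * hd
      | linear_combination (B 2 0) * hd | linear_combination (-(B 2 0)) * hd
      | linear_combination (B 2 1) * hd | linear_combination (-(B 2 1)) * hd
      | linear_combination (B 2 2) * hd | linear_combination (-(B 2 2)) * hd

end Stmt17Aux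

set_option maxHeartbeats 1000000 in
theorem stmt17 (Q : M3) (hsym : Qᵀ = Q)
    (Qbar : M3) (hQbar : Qbar = (1 / 2 : ℝ) • (Q.trace • (1 : M3) - Q))
    (lmin lmax : ℝ)
    (hmin_eig : ∃ w : V3, w ≠ 0 ∧ Qbar.mulVec w = lmin • w)
    (hmin : ∀ (μ : ℝ) (w : V3), w ≠ 0 → Qbar.mulVec w = μ • w → lmin ≤ μ)
    (hmax_eig : ∃ w : V3, w ≠ 0 ∧ Qbar.mulVec w = lmax • w)
    (hmax : ∀ (μ : ℝ) (w : V3), w ≠ 0 → Qbar.mulVec w = μ • w → μ ≤ lmax) :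
    ∀ R : M3, isRot R →
      (1 / 2 : ℝ) * lmin * frob3 (1 - R) ≤ (Q * (1 - R)).trace ∧
      (Q * (1 - R)).trace ≤ (1 / 2 : ℝ) * lmax * frob3 (1 - R) := by
  intro R hR
  have hq : ∀ i j, Q i j = Q j i := fun i j => by
    have h := congrFun (congrFun hsym j) i
    rwa [Matrix.transpose_apply] at h
  have hq10 : Q 1 0 = Q 0 1 := hq 1 0
  have hq20 : Q 2 0 = Q 0 2 := hq 2 0
  have hq21 : Q 2 1 = Q 1 2 := hq 2 1
  have hsymb : Qbarᵀ = Qbar := by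
    rw [hQbar]
    ext i j
    simp only [Matrix.transpose_apply, Matrix.smul_apply, Matrix.sub_apply, Matrix.one_apply,
      smul_eq_mul]
    by_cases h : i = j
    · subst h; ring
    · rw [if_neg h, if_neg (Ne.symm h), hq j i]
  set D : M3 := R + Rᵀ - (R.trace - 1) • (1:M3) with hD
  have hDadj : D = adjugate (1 - R) := rot_D_adj17 hR
  have hdet := rot_det017 hR
  have hDsym : ∀ i j, D i j = D j i := by
    intro i j
    simp only [hD, Matrix.add_apply, Matrix.sub_apply, Matrix.smul_apply,
      Matrix.transpose_apply, Matrix.one_apply, smul_eq_mul]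
    by_cases h : i = j
    · subst h; ring
    · rw [if_neg h, if_neg (Ne.symm h)]; ring
  have hminor : ∀ i j k, D i j * D k k = D i k * D j k := by
    intro i j k
    have h := adj_minor17 (1 - R) hdet i j k k
    rw [← hDadj] at h
    rw [h, hDsym k j]
  have hsq : ∀ i j, D i j ^ 2 = D i i * D j j := by
    intro i j
    have h := adj_minor17 (1 - R) hdet i i j j
    rw [← hDadj] at h
    linear_combination D i j * hDsym i j - h
  have o00 : R 0 0 * R 0 0 + R 1 0 * R 1 0 + R 2 0 * R 2 0 = 1 := by
    have := congrFun (congrFun hR.1 0) 0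
    simpa [Matrix.mul_apply, Fin.sum_univ_three, Matrix.one_apply, Matrix.transpose_apply]
      using this
  have o11 : R 0 1 * R 0 1 + R 1 1 * R 1 1 + R 2 1 * R 2 1 = 1 := by
    have := congrFun (congrFun hR.1 1) 1
    simpa [Matrix.mul_apply, Fin.sum_univ_three, Matrix.one_apply, Matrix.transpose_apply]
      using this
  have o22 : R 0 2 * R 0 2 + R 1 2 * R 1 2 + R 2 2 * R 2 2 = 1 := by
    have := congrFun (congrFun hR.1 2) 2
    simpa [Matrix.mul_apply, Fin.sum_univ_three, Matrix.one_apply, Matrix.transpose_apply]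
      using this
  have ht3 : R 0 0 + R 1 1 + R 2 2 ≤ 3 := by
    nlinarith [o00, o11, o22, sq_nonneg (R 1 0), sq_nonneg (R 2 0), sq_nonneg (R 0 1),
      sq_nonneg (R 2 1), sq_nonneg (R 0 2), sq_nonneg (R 1 2), sq_nonneg (R 0 0 - 1),
      sq_nonneg (R 1 1 - 1), sq_nonneg (R 2 2 - 1)]
  have htrD : D 0 0 + D 1 1 + D 2 2 = 3 - (R 0 0 + R 1 1 + R 2 2) := by
    simp [hD, Matrix.trace, Matrix.diag, Fin.sum_univ_three, Matrix.add_apply,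
      Matrix.sub_apply, Matrix.smul_apply, Matrix.transpose_apply, Matrix.one_apply,
      smul_eq_mul]
    ring
  have hS : 0 ≤ D 0 0 + D 1 1 + D 2 2 := by rw [htrD]; linarith
  have e01 := hsq 0 1
  have e02 := hsq 0 2
  have e12 := hsq 1 2
  have hd0 : 0 ≤ D 0 0 := by
    by_contra hcon; push_neg at hcon
    nlinarith [e01, e02, sq_nonneg (D 0 1), sq_nonneg (D 0 2),
      mul_nonneg (neg_nonneg.mpr hcon.le) hS]
  have hd1 : 0 ≤ D 1 1 := by
    by_contra hcon; push_neg at hcon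
    nlinarith [e01, e12, sq_nonneg (D 0 1), sq_nonneg (D 1 2),
      mul_nonneg (neg_nonneg.mpr hcon.le) hS]
  have hd2 : 0 ≤ D 2 2 := by
    by_contra hcon; push_neg at hcon
    nlinarith [e02, e12, sq_nonneg (D 0 2), sq_nonneg (D 1 2),
      mul_nonneg (neg_nonneg.mpr hcon.le) hS]
  have hT : (Q * (1 - R)).trace = ∑ i, ∑ j, Qbar i j * D i j := by
    rw [hQbar]
    simp [hD, Matrix.trace, Matrix.diag, Matrix.mul_apply, Fin.sum_univ_three,
      Matrix.one_apply, Matrix.sub_apply, Matrix.add_apply, Matrix.smul_apply,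
      Matrix.transpose_apply, smul_eq_mul]
    rw [hq10, hq20, hq21]
    ring
  have hF : frob3 (1 - R) = 2 * (D 0 0 + D 1 1 + D 2 2) := by
    simp [frob3, hD, Fin.sum_univ_three, Matrix.sub_apply, Matrix.one_apply,
      Matrix.add_apply, Matrix.smul_apply, Matrix.transpose_apply, Matrix.trace,
      Matrix.diag, smul_eq_mul]
    linear_combination o00 + o11 + o22
  have main : ∀ k : Fin 3, 0 < D k k →
      (1 / 2 : ℝ) * lmin * frob3 (1 - R) ≤ (Q * (1 - R)).trace ∧
      (Q * (1 - R)).trace ≤ (1 / 2 : ℝ) * lmax * frob3 (1 - R) := by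
    intro k hk
    set v : V3 := fun i => D i k / Real.sqrt (D k k) with hv
    have hkk0 : D k k ≠ 0 := ne_of_gt hk
    have hss : Real.sqrt (D k k) * Real.sqrt (D k k) = D k k := Real.mul_self_sqrt hk.le
    have hvv : ∀ i j, v i * v j = D i j := by
      intro i j
      have h1 : v i * v j = (D i k * D j k) / (D k k) := by
        rw [hv]; simp only []
        rw [div_mul_div_comm, hss]
      rw [h1, ← hminor i j k, mul_div_assoc, div_self hkk0, mul_one]
    have hvQ : v ⬝ᵥ Qbar.mulVec v = ∑ i, ∑ j, Qbar i j * D i j := by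
      simp [dotProduct, Matrix.mulVec, Fin.sum_univ_three]
      linear_combination (Qbar 0 0) * hvv 0 0 + (Qbar 0 1) * hvv 0 1 + (Qbar 0 2) * hvv 0 2
        + (Qbar 1 0) * hvv 1 0 + (Qbar 1 1) * hvv 1 1 + (Qbar 1 2) * hvv 1 2
        + (Qbar 2 0) * hvv 2 0 + (Qbar 2 1) * hvv 2 1 + (Qbar 2 2) * hvv 2 2
    have hvn : v ⬝ᵥ v = D 0 0 + D 1 1 + D 2 2 := by
      simp [dotProduct, Fin.sum_univ_three]
      linear_combination hvv 0 0 + hvv 1 1 + hvv 2 2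
    obtain ⟨hlo, hhi⟩ := quad_bound17 Qbar hsymb lmin lmax hmin hmax v
    rw [hvQ, hvn] at hlo hhi
    constructor <;> rw [hT, hF] <;> linarith
  rcases lt_or_eq_of_le hd0 with h0 | h0
  · exact main 0 h0
  rcases lt_or_eq_of_le hd1 with h1 | h1
  · exact main 1 h1
  rcases lt_or_eq_of_le hd2 with h2 | h2
  · exact main 2 h2
  have hz00 : D 0 0 = 0 := h0.symm
  have hz11 : D 1 1 = 0 := h1.symm
  have hz22 : D 2 2 = 0 := h2.symm
  have hz01 : D 0 1 = 0 := by
    have := hsq 0 1; rw [hz00, hz11] at this; simpa [pow_eq_zero_iff] using this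
  have hz02 : D 0 2 = 0 := by
    have := hsq 0 2; rw [hz00, hz22] at this; simpa [pow_eq_zero_iff] using this
  have hz12 : D 1 2 = 0 := by
    have := hsq 1 2; rw [hz11, hz22] at this; simpa [pow_eq_zero_iff] using this
  have hz10 : D 1 0 = 0 := by rw [hDsym 1 0, hz01]
  have hz20 : D 2 0 = 0 := by rw [hDsym 2 0, hz02]
  have hz21 : D 2 1 = 0 := by rw [hDsym 2 1, hz12]
  have hT0 : (Q * (1 - R)).trace = 0 := by
    rw [hT]
    simp [Fin.sum_univ_three, hz00, hz01, hz02, hz10, hz11, hz12, hz20, hz21, hz22]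
  have hF0 : frob3 (1 - R) = 0 := by
    rw [hF, hz00, hz11, hz22]; ring
  rw [hT0, hF0]
  norm_num
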